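/- For every integer k ≥ 1, the center of the group Q_k with presentation ⟨x, y, t | [t,y] = x^k, x t = t x, x y = y x⟩ equals the cyclic subgroup generated by (the image of) x, and x has infinite order in Q_k. -/

import Mathlib

namespace Stmt6

/-- The free group generators `x, y, t`. -/
private abbrev qx : FreeGroup (Fin 3) := FreeGroup.of 0
private abbrev qy : FreeGroup (Fin 3) := FreeGroup.of 1
private abbrev qt : FreeGroup (Fin 3) := FreeGroup.of 2

/-- The relators of the presentation `⟨x, y, t | [t,y] = xᵏ, x t = t x, x y = y x⟩`,
where `[t,y] = t y t⁻¹ y⁻¹`. -/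
def qRels (k : ℤ) : Set (FreeGroup (Fin 3)) :=
  { qt * qy * qt⁻¹ * qy⁻¹ * (qx ^ k)⁻¹,
    qx * qt * qx⁻¹ * qt⁻¹,
    qx * qy * qx⁻¹ * qy⁻¹ }

/-- `Q k = ⟨x, y, t | [t,y] = xᵏ, x t = t x, x y = y x⟩`. -/
abbrev Q (k : ℤ) : Type := PresentedGroup (qRels k)

/-- The image of the generator `x` in `Q k`. -/
def xQ (k : ℤ) : Q k := PresentedGroup.of 0

def yQ (k : ℤ) : Q k := PresentedGroup.of 1
def tQ (k : ℤ) : Q k := PresentedGroup.of 2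

variable (k : ℤ)

def H (_k : ℤ) : Type := ℤ × ℤ × ℤ

instance : Mul (H k) := ⟨fun a b => (a.1 + b.1 + k * a.2.2 * b.2.1, a.2.1 + b.2.1, a.2.2 + b.2.2)⟩
instance : One (H k) := ⟨((0:ℤ), (0:ℤ), (0:ℤ))⟩
instance : Inv (H k) := ⟨fun a => (-a.1 + k * a.2.2 * a.2.1, -a.2.1, -a.2.2)⟩

lemma H.mul_def (a b : H k) :
    a * b = (a.1 + b.1 + k * a.2.2 * b.2.1, a.2.1 + b.2.1, a.2.2 + b.2.2) := rfl
lemma H.one_def : (1 : H k) = ((0:ℤ), (0:ℤ), (0:ℤ)) := rfl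
lemma H.inv_def (a : H k) : a⁻¹ = (-a.1 + k * a.2.2 * a.2.1, -a.2.1, -a.2.2) := rfl

instance : Group (H k) where
  mul_assoc a b c := by
    erw [H.mul_def, H.mul_def, H.mul_def, H.mul_def]; exact Prod.ext (by ring) (Prod.ext (by ring) (by ring))
  one_mul a := by
    erw [H.mul_def, H.one_def]; exact Prod.ext (by ring) (Prod.ext (by ring) (by ring))
  mul_one a := by
    erw [H.mul_def, H.one_def]; exact Prod.ext (by ring) (Prod.ext (by ring) (by ring))
  inv_mul_cancel a := by
    erw [H.mul_def, H.one_def, H.inv_def]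
    exact Prod.ext (by ring) (Prod.ext (by ring) (by ring))

def hx : H k := ((1:ℤ), (0:ℤ), (0:ℤ))
def hy : H k := ((0:ℤ), (1:ℤ), (0:ℤ))
def ht : H k := ((0:ℤ), (0:ℤ), (1:ℤ))

lemma hx_zpow (n : ℤ) : (hx k) ^ n = ((n:ℤ), (0:ℤ), (0:ℤ)) := by
  induction n using Int.induction_on with
  | zero => rfl
  | succ n ih =>
      rw [zpow_add_one, ih, hx]; erw [H.mul_def]
      exact Prod.ext (by ring) (Prod.ext (by ring) (by ring))
  | pred n ih =>
      rw [zpow_sub_one, ih, hx]; erw [H.inv_def, H.mul_def]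
      exact Prod.ext (by simp; try ring) (Prod.ext (by simp; try ring) (by simp; try ring))

lemma hy_zpow (n : ℤ) : (hy k) ^ n = ((0:ℤ), (n:ℤ), (0:ℤ)) := by
  induction n using Int.induction_on with
  | zero => rfl
  | succ n ih =>
      rw [zpow_add_one, ih, hy]; erw [H.mul_def]
      exact Prod.ext (by simp) (Prod.ext (by ring) (by simp))
  | pred n ih =>
      rw [zpow_sub_one, ih, hy]; erw [H.inv_def, H.mul_def]
      exact Prod.ext (by simp) (Prod.ext (by ring) (by simp))

lemma ht_zpow (n : ℤ) : (ht k) ^ n = ((0:ℤ), (0:ℤ), (n:ℤ)) := by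
  induction n using Int.induction_on with
  | zero => rfl
  | succ n ih =>
      rw [zpow_add_one, ih, ht]; erw [H.mul_def]
      exact Prod.ext (by simp) (Prod.ext (by simp) (by ring))
  | pred n ih =>
      rw [zpow_sub_one, ih, ht]; erw [H.inv_def, H.mul_def]
      exact Prod.ext (by simp) (Prod.ext (by simp) (by ring))


lemma center_H (hk : k ≠ 0) : Subgroup.center (H k) = Subgroup.zpowers (hx k) := by
  ext z
  rw [Subgroup.mem_center_iff, Subgroup.mem_zpowers_iff]
  constructor
  · intro h
    have h1 := h (hy k)
    have h2 := h (ht k)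
    rw [H.mul_def, H.mul_def, hy] at h1
    rw [H.mul_def, H.mul_def, ht] at h2
    have e1 : z.2.2 = 0 := by
      have := congrArg Prod.fst h1
      simp at this
      tauto
    have e2 : z.2.1 = 0 := by
      have := congrArg Prod.fst h2
      simp at this
      tauto
    exact ⟨z.1, by rw [hx_zpow]; exact Prod.ext rfl (Prod.ext e2.symm e1.symm)⟩
  · rintro ⟨n, rfl⟩
    intro g
    rw [hx_zpow]; erw [H.mul_def, H.mul_def]
    exact Prod.ext (by simp; try ring) (Prod.ext (by simp; try ring) (by simp; try ring))


lemma rel_one {r : FreeGroup (Fin 3)} (hr : r ∈ qRels k) :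
    PresentedGroup.mk (qRels k) r = 1 :=
  (QuotientGroup.eq_one_iff _).mpr (Subgroup.subset_normalClosure hr)

lemma commXT : Commute (xQ k) (tQ k) := by
  have h := rel_one k (show qx * qt * qx⁻¹ * qt⁻¹ ∈ qRels k by
    simp [qRels])
  simp only [map_mul, map_inv] at h
  rw [mul_inv_eq_one, mul_inv_eq_iff_eq_mul] at h
  exact h

lemma commXY : Commute (xQ k) (yQ k) := by
  have h := rel_one k (show qx * qy * qx⁻¹ * qy⁻¹ ∈ qRels k by
    simp [qRels])
  simp only [map_mul, map_inv] at h
  rw [mul_inv_eq_one, mul_inv_eq_iff_eq_mul] at h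
  exact h

lemma relTY : tQ k * yQ k = xQ k ^ k * yQ k * tQ k := by
  have h := rel_one k (show qt * qy * qt⁻¹ * qy⁻¹ * (qx ^ k)⁻¹ ∈ qRels k by
    simp [qRels])
  simp only [map_mul, map_inv, map_zpow] at h
  rw [mul_inv_eq_one, mul_inv_eq_iff_eq_mul, mul_inv_eq_iff_eq_mul] at h
  exact h

lemma xQ_central : ∀ g : Q k, Commute (xQ k) g := by
  intro g
  have : g ∈ Subgroup.centralizer {xQ k} := by
    refine PresentedGroup.generated_by (qRels k) _ ?_ g
    intro j
    rw [Subgroup.mem_centralizer_iff]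
    rintro z rfl
    fin_cases j
    · rfl
    · exact commXY k
    · exact commXT k
  exact Subgroup.mem_centralizer_iff.mp this (xQ k) rfl


lemma cX (n : ℤ) (g : Q k) : Commute (xQ k ^ n) g := (xQ_central k g).zpow_left n

/-- pull a central power of `x` to the front -/
lemma pullX (n : ℤ) (g h : Q k) : g * (xQ k ^ n * h) = xQ k ^ n * (g * h) := by
  rw [← mul_assoc, ← (cX k n g).eq, mul_assoc]

lemma relTY' : tQ k * yQ k = xQ k ^ k * (yQ k * tQ k) := by
  rw [relTY, mul_assoc]

lemma relTYinv : tQ k * (yQ k)⁻¹ = xQ k ^ (-k) * ((yQ k)⁻¹ * tQ k) := by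
  rw [← mul_left_inj (yQ k)]
  rw [mul_assoc, mul_assoc, inv_mul_cancel, mul_one, mul_assoc, relTY', pullX,
    ← mul_assoc (yQ k)⁻¹, inv_mul_cancel, one_mul, ← mul_assoc, ← zpow_add]
  simp

lemma tY_pow (b : ℤ) : tQ k * yQ k ^ b = xQ k ^ (k * b) * (yQ k ^ b * tQ k) := by
  induction b using Int.induction_on with
  | zero => simp
  | succ b ih =>
      calc tQ k * yQ k ^ ((b : ℤ) + 1) = (tQ k * yQ k ^ (b : ℤ)) * yQ k := by
            rw [zpow_add_one, ← mul_assoc]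
        _ = xQ k ^ (k * b) * (yQ k ^ (b : ℤ) * (tQ k * yQ k)) := by
            rw [ih, mul_assoc, mul_assoc]
        _ = xQ k ^ (k * b) * (xQ k ^ k * (yQ k ^ (b : ℤ) * (yQ k * tQ k))) := by
            rw [relTY', pullX]
        _ = xQ k ^ (k * ((b : ℤ) + 1)) * (yQ k ^ ((b : ℤ) + 1) * tQ k) := by
            rw [← mul_assoc, ← zpow_add, ← mul_assoc (yQ k ^ (b : ℤ)), ← zpow_add_one]
            ring_nf
  | pred b ih =>
      calc tQ k * yQ k ^ (-(b : ℤ) - 1) = (tQ k * yQ k ^ (-(b : ℤ))) * (yQ k)⁻¹ := by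
            rw [zpow_sub_one, ← mul_assoc]
        _ = xQ k ^ (k * (-b)) * (yQ k ^ (-(b : ℤ)) * (tQ k * (yQ k)⁻¹)) := by
            rw [ih, mul_assoc, mul_assoc]
        _ = xQ k ^ (k * (-b)) * (xQ k ^ (-k) * (yQ k ^ (-(b : ℤ)) * ((yQ k)⁻¹ * tQ k))) := by
            rw [relTYinv, pullX]
        _ = xQ k ^ (k * (-(b : ℤ) - 1)) * (yQ k ^ (-(b : ℤ) - 1) * tQ k) := by
            rw [← mul_assoc, ← zpow_add, ← mul_assoc (yQ k ^ (-(b : ℤ))), ← zpow_sub_one]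
            ring_nf

lemma tinv_Y_pow (b : ℤ) : (tQ k)⁻¹ * yQ k ^ b = xQ k ^ (-(k * b)) * (yQ k ^ b * (tQ k)⁻¹) := by
  have h : tQ k * ((tQ k)⁻¹ * yQ k ^ b) =
      tQ k * (xQ k ^ (-(k * b)) * (yQ k ^ b * (tQ k)⁻¹)) := by
    conv_rhs => rw [pullX, ← mul_assoc (tQ k), tY_pow]
    group
  exact mul_left_cancel h

lemma tpow_Y_pow (c b : ℤ) :
    tQ k ^ c * yQ k ^ b = xQ k ^ (k * c * b) * (yQ k ^ b * tQ k ^ c) := by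
  induction c using Int.induction_on with
  | zero => simp
  | succ c ih =>
      calc tQ k ^ ((c : ℤ) + 1) * yQ k ^ b = tQ k ^ (c : ℤ) * (tQ k * yQ k ^ b) := by
            rw [zpow_add_one, mul_assoc]
        _ = tQ k ^ (c : ℤ) * (xQ k ^ (k * b) * (yQ k ^ b * tQ k)) := by rw [tY_pow]
        _ = xQ k ^ (k * b) * ((tQ k ^ (c : ℤ) * yQ k ^ b) * tQ k) := by
            rw [pullX]; group
        _ = xQ k ^ (k * b) * (xQ k ^ (k * c * b) * (yQ k ^ b * (tQ k ^ (c : ℤ) * tQ k))) := by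
            rw [ih]; group
        _ = xQ k ^ (k * ((c : ℤ) + 1) * b) * (yQ k ^ b * tQ k ^ ((c : ℤ) + 1)) := by
            rw [← mul_assoc, ← zpow_add, ← zpow_add_one]
            ring_nf
  | pred c ih =>
      calc tQ k ^ (-(c : ℤ) - 1) * yQ k ^ b = tQ k ^ (-(c : ℤ)) * ((tQ k)⁻¹ * yQ k ^ b) := by
            rw [zpow_sub_one, mul_assoc]
        _ = tQ k ^ (-(c : ℤ)) * (xQ k ^ (-(k * b)) * (yQ k ^ b * (tQ k)⁻¹)) := by
            rw [tinv_Y_pow]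
        _ = xQ k ^ (-(k * b)) * ((tQ k ^ (-(c : ℤ)) * yQ k ^ b) * (tQ k)⁻¹) := by
            rw [pullX]; group
        _ = xQ k ^ (-(k * b)) * (xQ k ^ (k * (-c) * b) *
              (yQ k ^ b * (tQ k ^ (-(c : ℤ)) * (tQ k)⁻¹))) := by
            rw [ih]; group
        _ = xQ k ^ (k * (-(c : ℤ) - 1) * b) * (yQ k ^ b * tQ k ^ (-(c : ℤ) - 1)) := by
            rw [← mul_assoc, ← zpow_add, ← zpow_sub_one]
            ring_nf


/-- the normal form `x^a y^b t^c` in `Q k` -/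
def qw (a : ℤ × ℤ × ℤ) : Q k := xQ k ^ a.1 * (yQ k ^ a.2.1 * tQ k ^ a.2.2)

lemma qw_key (a2 a3 b2 b3 : ℤ) :
    (yQ k ^ a2 * tQ k ^ a3) * (yQ k ^ b2 * tQ k ^ b3) =
      xQ k ^ (k * a3 * b2) * (yQ k ^ (a2 + b2) * tQ k ^ (a3 + b3)) := by
  calc (yQ k ^ a2 * tQ k ^ a3) * (yQ k ^ b2 * tQ k ^ b3)
      = yQ k ^ a2 * ((tQ k ^ a3 * yQ k ^ b2) * tQ k ^ b3) := by group
    _ = yQ k ^ a2 * ((xQ k ^ (k * a3 * b2) * (yQ k ^ b2 * tQ k ^ a3)) * tQ k ^ b3) := by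
        rw [tpow_Y_pow]
    _ = xQ k ^ (k * a3 * b2) * (yQ k ^ a2 * ((yQ k ^ b2 * tQ k ^ a3) * tQ k ^ b3)) := by
        rw [mul_assoc (xQ k ^ (k * a3 * b2)), pullX]
    _ = xQ k ^ (k * a3 * b2) * (yQ k ^ (a2 + b2) * tQ k ^ (a3 + b3)) := by
        rw [zpow_add, zpow_add]; group

def gH : H k →* Q k :=
  MonoidHom.mk' (qw k) (by
    rintro ⟨a1, a2, a3⟩ ⟨b1, b2, b3⟩
    show qw k (a1 + b1 + k * a3 * b2, a2 + b2, a3 + b3) = qw k (a1, a2, a3) * qw k (b1, b2, b3)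
    unfold qw
    calc xQ k ^ (a1 + b1 + k * a3 * b2) * (yQ k ^ (a2 + b2) * tQ k ^ (a3 + b3))
        = xQ k ^ a1 * (xQ k ^ b1 * (xQ k ^ (k * a3 * b2) *
            (yQ k ^ (a2 + b2) * tQ k ^ (a3 + b3)))) := by group
      _ = xQ k ^ a1 * (xQ k ^ b1 *
            ((yQ k ^ a2 * tQ k ^ a3) * (yQ k ^ b2 * tQ k ^ b3))) := by rw [qw_key]
      _ = xQ k ^ a1 * (yQ k ^ a2 * tQ k ^ a3) * (xQ k ^ b1 * (yQ k ^ b2 * tQ k ^ b3)) := by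
        conv_rhs => rw [mul_assoc, pullX])

def fvec : Fin 3 → H k := ![hx k, hy k, ht k]

lemma frels : ∀ r ∈ qRels k, FreeGroup.lift (fvec k) r = 1 := by
  intro r hr
  rcases hr with rfl | rfl | rfl
  · simp only [map_mul, map_inv, map_zpow, FreeGroup.lift_apply_of, fvec]
    simp only [Matrix.cons_val_zero, Matrix.cons_val_one, Matrix.head_cons, Matrix.cons_val_two,
      Matrix.tail_cons]
    rw [hx_zpow]
    erw [H.mul_def, H.mul_def, H.mul_def, H.mul_def, H.inv_def, H.inv_def, H.inv_def, H.one_def]; simp only [hx, hy, ht]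
    exact Prod.ext (by simp; try ring) (Prod.ext (by simp; try ring) (by simp; try ring))
  · simp only [map_mul, map_inv, FreeGroup.lift_apply_of, fvec]
    simp only [Matrix.cons_val_zero, Matrix.cons_val_one, Matrix.head_cons, Matrix.cons_val_two,
      Matrix.tail_cons]
    erw [H.mul_def, H.mul_def, H.mul_def, H.inv_def, H.inv_def, H.one_def]; simp only [hx, hy, ht]
    exact Prod.ext (by simp; try ring) (Prod.ext (by simp; try ring) (by simp; try ring))
  · simp only [map_mul, map_inv, FreeGroup.lift_apply_of, fvec]
    simp only [Matrix.cons_val_zero, Matrix.cons_val_one, Matrix.head_cons, Matrix.cons_val_two,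
      Matrix.tail_cons]
    erw [H.mul_def, H.mul_def, H.mul_def, H.inv_def, H.inv_def, H.one_def]; simp only [hx, hy, ht]
    exact Prod.ext (by simp; try ring) (Prod.ext (by simp; try ring) (by simp; try ring))

def fH : Q k →* H k := PresentedGroup.toGroup (frels k)

lemma fH_x : fH k (xQ k) = hx k := PresentedGroup.toGroup.of (frels k)
lemma fH_y : fH k (yQ k) = hy k := PresentedGroup.toGroup.of (frels k)
lemma fH_t : fH k (tQ k) = ht k := PresentedGroup.toGroup.of (frels k)

lemma gf_id : (gH k).comp (fH k) = MonoidHom.id (Q k) := by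
  ext i
  fin_cases i
  · show gH k (fH k (xQ k)) = xQ k
    rw [fH_x]
    show qw k ((1:ℤ), (0:ℤ), (0:ℤ)) = xQ k
    simp [qw]
  · show gH k (fH k (yQ k)) = yQ k
    rw [fH_y]
    show qw k ((0:ℤ), (1:ℤ), (0:ℤ)) = yQ k
    simp [qw]
  · show gH k (fH k (tQ k)) = tQ k
    rw [fH_t]
    show qw k ((0:ℤ), (0:ℤ), (1:ℤ)) = tQ k
    simp [qw]

lemma fg_id (a : H k) : fH k (gH k a) = a := by
  obtain ⟨a1, a2, a3⟩ := a
  show fH k (qw k (a1, a2, a3)) = _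
  unfold qw
  rw [map_mul, map_mul, map_zpow, map_zpow, map_zpow, fH_x, fH_y, fH_t,
    hx_zpow, hy_zpow, ht_zpow]; erw [H.mul_def, H.mul_def]
  exact Prod.ext (by simp) (Prod.ext (by simp) (by simp))

def eQ : Q k ≃* H k where
  toFun := fH k
  invFun := gH k
  left_inv q := by
    have := DFunLike.congr_fun (gf_id k) q
    simpa using this
  right_inv := fg_id k
  map_mul' := map_mul (fH k)


/-- For every integer `k ≥ 1`, the center of
`Q k = ⟨x, y, t | [t,y] = xᵏ, x t = t x, x y = y x⟩` equals the cyclic subgroup generated by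
(the image of) `x`, and `x` has infinite order in `Q k`. -/
theorem stmt6 (k : ℤ) (hk : 1 ≤ k) :
    Subgroup.center (Q k) = Subgroup.zpowers (xQ k) ∧ ¬ IsOfFinOrder (xQ k) := by
  have hk0 : k ≠ 0 := by omega
  constructor
  · ext q
    rw [Subgroup.mem_center_iff, Subgroup.mem_zpowers_iff]
    constructor
    · intro h
      have hc : eQ k q ∈ Subgroup.center (H k) := by
        rw [Subgroup.mem_center_iff]
        intro g
        rw [← (eQ k).apply_symm_apply g, ← map_mul, ← map_mul, h ((eQ k).symm g)]
      rw [center_H k hk0, Subgroup.mem_zpowers_iff] at hc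
      obtain ⟨n, hn⟩ := hc
      refine ⟨n, (eQ k).injective ?_⟩
      rw [map_zpow]
      show (fH k (xQ k)) ^ n = _
      rw [fH_x, hn]
    · rintro ⟨n, rfl⟩ g
      exact (cX k n g).eq.symm
  · intro hfin
    have h2 : IsOfFinOrder (hx k) := by
      have := (fH k).isOfFinOrder hfin
      rwa [show fH k (xQ k) = hx k from fH_x k] at this
    obtain ⟨n, hn, hpow⟩ := isOfFinOrder_iff_pow_eq_one.mp h2
    have : (hx k) ^ (n : ℤ) = 1 := by rw [zpow_natCast, hpow]
    rw [hx_zpow, H.one_def] at this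
    have := congrArg Prod.fst this
    simp at this
    omega

end Stmt6
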